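/- There exists a Borel probability measure μ on ℝ such that ∫_ℝ |x|^p dμ(x) < ∞ for every p with 0 < p < 3, and such that for every t > 0 the function g_{μ,t}(x) = ∫_ℝ ((x-y)² + t²)⁻¹ dμ(y) is not unimodal. -/

import Mathlib

open MeasureTheory Real Set Filter Topology

/-- A function `f : ℝ → ℝ` is unimodal if there is a mode `a` such that `f` is
nondecreasing on `(-∞, a]` and nonincreasing on `[a, ∞)`. -/
def Unimodal (f : ℝ → ℝ) : Prop :=
  ∃ a : ℝ, MonotoneOn f (Set.Iic a) ∧ AntitoneOn f (Set.Ici a)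

set_option maxHeartbeats 1000000

noncomputable section

/-- cluster position scale -/
def cP (k : ℕ) : ℝ := 2 ^ (k ^ 2)

/-- cluster mass (real) -/
def cm (k : ℕ) : ℝ := (k : ℝ) ^ 6 / 2 ^ (3 * k ^ 2)

lemma cP_pos (k : ℕ) : 0 < cP k := by unfold cP; positivity

lemma cm_nonneg (k : ℕ) : 0 ≤ cm k :=
  div_nonneg (by positivity) (by positivity)

lemma nat_key (k : ℕ) : k ^ 6 * 2 ^ k ≤ 2 ^ (3 * k ^ 2) := by
  rcases lt_or_ge k 3 with h | h
  · interval_cases k <;> decide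
  · calc k ^ 6 * 2 ^ k ≤ (2 ^ k) ^ 6 * 2 ^ k :=
        Nat.mul_le_mul_right _ (Nat.pow_le_pow_left (Nat.lt_two_pow_self (n := k)).le 6)
      _ = 2 ^ (6 * k + k) := by rw [← pow_mul, ← pow_add]; ring_nf
      _ ≤ 2 ^ (3 * k ^ 2) := Nat.pow_le_pow_right (by norm_num) (by nlinarith)
lemma cm_le_geom (k : ℕ) : cm k ≤ (1/2 : ℝ) ^ k := by
  unfold cm
  rw [div_le_iff₀ (by positivity), one_div, inv_pow, inv_mul_eq_div,
    le_div_iff₀ (by positivity)]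
  have := nat_key k
  calc ((k:ℝ)) ^ 6 * 2 ^ k = ((k ^ 6 * 2 ^ k : ℕ) : ℝ) := by push_cast; ring
    _ ≤ ((2 ^ (3 * k ^ 2) : ℕ) : ℝ) := by exact_mod_cast this
    _ = 2 ^ (3 * k ^ 2) := by push_cast; ring

lemma summable_cm : Summable (fun j : ℕ => cm (j + 1)) := by
  apply Summable.of_nonneg_of_le (fun j => cm_nonneg _) (fun j => ?_)
    (summable_geometric_two.mul_right (1/2))
  calc cm (j+1) ≤ (1/2:ℝ)^(j+1) := cm_le_geom _
    _ = (1/2)^j * (1/2) := by ring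

lemma tsum_cm_le : (∑' j : ℕ, cm (j + 1)) ≤ 1 := by
  have h1 : (∑' j : ℕ, ((1:ℝ)/2)^j * (1/2)) = 1 := by
    rw [tsum_mul_right, tsum_geometric_two]; norm_num
  rw [← h1]
  apply Summable.tsum_le_tsum _ summable_cm (summable_geometric_two.mul_right (1/2))
  intro j
  calc cm (j+1) ≤ (1/2:ℝ)^(j+1) := cm_le_geom _
    _ = (1/2)^j * (1/2) := by ring

/-- weight of one atom of cluster k, as `ℝ≥0∞` -/
def cwE (k : ℕ) : ENNReal := ENNReal.ofReal (cm k / 2)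

/-- left atom of cluster j+1 -/
def La (j : ℕ) : ℝ := cP (j + 1) - (j + 1)
/-- right atom of cluster j+1 -/
def Ra (j : ℕ) : ℝ := cP (j + 1) + (j + 1)

/-- the measure -/
def cμ : Measure ℝ :=
  (ENNReal.ofReal (1 - ∑' j : ℕ, cm (j + 1))) • Measure.dirac 0
    + Measure.sum (fun j : ℕ => cwE (j + 1) • Measure.dirac (La j))
    + Measure.sum (fun j : ℕ => cwE (j + 1) • Measure.dirac (Ra j))

lemma tsum_cwE : (∑' j : ℕ, cwE (j + 1)) = ENNReal.ofReal ((∑' j : ℕ, cm (j + 1)) / 2) := by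
  unfold cwE
  rw [← ENNReal.ofReal_tsum_of_nonneg (fun j => by
      have := cm_nonneg (j+1); positivity) (summable_cm.div_const 2)]
  congr 1
  simp only [div_eq_mul_inv]
  exact tsum_mul_right

instance cμ_prob : IsProbabilityMeasure cμ := by
  constructor
  have hT0 : 0 ≤ (∑' j : ℕ, cm (j + 1)) := tsum_nonneg (fun j => cm_nonneg _)
  have hT1 : (∑' j : ℕ, cm (j + 1)) ≤ 1 := tsum_cm_le
  simp only [cμ, Measure.add_apply, Measure.smul_apply, Measure.sum_apply _ MeasurableSet.univ,
    Measure.dirac_apply' _ MeasurableSet.univ, smul_eq_mul]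
  simp only [Set.indicator_univ, Pi.one_apply, mul_one]
  rw [tsum_cwE]
  rw [← ENNReal.ofReal_add (by linarith) (by positivity),
    ← ENNReal.ofReal_add (by linarith) (by linarith)]
  rw [show (1 - ∑' j : ℕ, cm (j + 1)) + (∑' j : ℕ, cm (j + 1)) / 2
      + (∑' j : ℕ, cm (j + 1)) / 2 = 1 by ring]
  exact ENNReal.ofReal_one
lemma cP_le_cP {k l : ℕ} (h : k ≤ l) : cP k ≤ cP l := by
  unfold cP
  exact pow_le_pow_right₀ one_le_two (Nat.pow_le_pow_left h 2)

lemma nat_le_cP (k : ℕ) : (k : ℝ) ≤ cP k := by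
  unfold cP
  calc (k : ℝ) ≤ 2 ^ k := by exact_mod_cast (Nat.lt_two_pow_self (n := k)).le
    _ ≤ 2 ^ (k ^ 2) := pow_le_pow_right₀ one_le_two (Nat.le_self_pow two_ne_zero k)

lemma sixteen_nat_le_cP {k : ℕ} (hk : 4 ≤ k) : 16 * (k : ℝ) ≤ cP k := by
  unfold cP
  have h1 : (k : ℝ) ≤ 2 ^ k := by exact_mod_cast (Nat.lt_two_pow_self (n := k)).le
  calc 16 * (k : ℝ) ≤ 16 * 2 ^ k := by linarith
    _ = 2 ^ (k + 4) := by rw [pow_add]; ring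
    _ ≤ 2 ^ (k ^ 2) := pow_le_pow_right₀ one_le_two (by nlinarith)

lemma thirtytwo_cP_le {j k : ℕ} (hj : j < k) (hk : 4 ≤ k) : 32 * cP j ≤ cP k := by
  unfold cP
  have h : j ^ 2 + 5 ≤ k ^ 2 := by
    rcases lt_or_ge j 2 with h2 | h2
    · nlinarith
    · have : j + 1 ≤ k := hj
      nlinarith
  calc 32 * (2 : ℝ) ^ (j ^ 2) = 2 ^ (j ^ 2 + 5) := by rw [pow_add]; ring
    _ ≤ 2 ^ (k ^ 2) := pow_le_pow_right₀ one_le_two h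

lemma far_dist {K j : ℕ} (hK : 4 ≤ K) (hjK : j + 1 ≠ K) {x y : ℝ}
    (hx : |x - cP K| ≤ K) (hy : |y - cP (j + 1)| ≤ (j + 1 : ℕ)) :
    cP K / 2 ≤ |x - y| := by
  have hx' := abs_le.1 hx
  have hy' := abs_le.1 hy
  have hKP := cP_pos K
  have hkP := cP_pos (j + 1)
  rcases lt_or_gt_of_ne hjK with h | h
  · have h1 : y ≤ 2 * cP (j + 1) := by
      have hn := nat_le_cP (j + 1); push_cast at hy' hn ⊢; linarith
    have h2 : 32 * cP (j + 1) ≤ cP K := thirtytwo_cP_le h hK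
    have h3 : 16 * (K : ℝ) ≤ cP K := sixteen_nat_le_cP hK
    have : cP K / 2 ≤ x - y := by linarith
    exact this.trans (le_abs_self _)
  · have h2 : 32 * cP K ≤ cP (j + 1) := thirtytwo_cP_le h (by omega)
    have h3 : 16 * ((j + 1 : ℕ) : ℝ) ≤ cP (j + 1) := sixteen_nat_le_cP (by omega)
    have h5 : (K : ℝ) ≤ cP K := nat_le_cP K
    have : cP K / 2 ≤ y - x := by push_cast at hy' h3 ⊢; linarith
    calc cP K / 2 ≤ y - x := this
      _ ≤ |y - x| := le_abs_self _
      _ = |x - y| := abs_sub_comm _ _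

lemma far_zero {K : ℕ} (hK : 4 ≤ K) {x : ℝ} (hx : |x - cP K| ≤ K) :
    cP K / 2 ≤ |x - 0| := by
  have hx' := abs_le.1 hx
  have hKP := cP_pos K
  have h3 : 16 * (K : ℝ) ≤ cP K := sixteen_nat_le_cP hK
  have : cP K / 2 ≤ x - 0 := by linarith
  exact this.trans (le_abs_self _)

lemma kernel_diff_bound {t s R u v : ℝ} (ht : 0 < t) (hR : 0 < R) (hs : 0 ≤ s)
    (hu : R / 2 ≤ |u|) (hv : R / 2 ≤ |v|) (huv : |u - v| ≤ s) :
    (v ^ 2 + t ^ 2)⁻¹ - (u ^ 2 + t ^ 2)⁻¹ ≤ 16 * s / R ^ 3 := by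
  set a := |u| with ha
  set b := |v| with hb
  have ha0 : 0 < a := lt_of_lt_of_le (by positivity) hu
  have hb0 : 0 < b := lt_of_lt_of_le (by positivity) hv
  have hA : (0 : ℝ) < u ^ 2 + t ^ 2 := by positivity
  have hB : (0 : ℝ) < v ^ 2 + t ^ 2 := by positivity
  have key : (v ^ 2 + t ^ 2)⁻¹ - (u ^ 2 + t ^ 2)⁻¹
      = (u ^ 2 - v ^ 2) / ((u ^ 2 + t ^ 2) * (v ^ 2 + t ^ 2)) := by
    rw [inv_sub_inv hB.ne' hA.ne', mul_comm]
    congr 1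
    ring
  rw [key, div_le_div_iff₀ (by positivity) (by positivity)]
  have h1 : u ^ 2 - v ^ 2 ≤ s * (a + b) := by
    have e1 : u ^ 2 - v ^ 2 ≤ |u ^ 2 - v ^ 2| := le_abs_self _
    have e2 : |u ^ 2 - v ^ 2| = |u - v| * |u + v| := by
      rw [show u ^ 2 - v ^ 2 = (u - v) * (u + v) by ring, abs_mul]
    have e3 : |u + v| ≤ a + b := abs_add_le _ _
    have e4 : (0:ℝ) ≤ |u - v| := abs_nonneg _
    nlinarith
  have hsq : u ^ 2 = a ^ 2 := (sq_abs u).symm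
  have hsq' : v ^ 2 = b ^ 2 := (sq_abs v).symm
  have e1 : R ≤ 2 * a := by linarith
  have e2 : R ≤ 2 * b := by linarith
  have hRR : R * R ≤ (2 * a) * (2 * b) :=
    mul_le_mul e1 e2 hR.le (by positivity)
  have hab : R * R * R ≤ (2 * a) * (2 * b) * (2 * b) :=
    mul_le_mul hRR e2 hR.le (by positivity)
  have hab' : R * R * R ≤ (2 * a) * (2 * b) * (2 * a) :=
    mul_le_mul hRR e1 hR.le (by positivity)
  have h2 : (a + b) * R ^ 3 ≤ 16 * (a ^ 2 * b ^ 2) := by nlinarith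
  have h3 : a ^ 2 * b ^ 2 ≤ (u ^ 2 + t ^ 2) * (v ^ 2 + t ^ 2) := by nlinarith [sq_nonneg t]
  calc (u ^ 2 - v ^ 2) * R ^ 3 ≤ s * (a + b) * R ^ 3 := by nlinarith [pow_pos hR 3]
    _ = s * ((a + b) * R ^ 3) := by ring
    _ ≤ s * (16 * (a ^ 2 * b ^ 2)) := by apply mul_le_mul_of_nonneg_left h2 hs
    _ ≤ s * (16 * ((u ^ 2 + t ^ 2) * (v ^ 2 + t ^ 2))) := by
        apply mul_le_mul_of_nonneg_left (by linarith) hs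
    _ = 16 * s * ((u ^ 2 + t ^ 2) * (v ^ 2 + t ^ 2)) := by ring

lemma not_unimodal_of {f : ℝ → ℝ} {u v z : ℝ} (huv : u < v) (hvz : v < z)
    (h1 : f v < f u) (h2 : f v < f z) : ¬ Unimodal f := by
  rintro ⟨a, hmono, hanti⟩
  rcases le_total v a with h | h
  · exact absurd (hmono (Set.mem_Iic.2 (huv.le.trans h)) (Set.mem_Iic.2 h) huv.le)
      (not_le.mpr h1)
  · exact absurd (hanti (Set.mem_Ici.2 h) (Set.mem_Ici.2 (h.trans hvz.le)) hvz.le)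
      (not_le.mpr h2)

lemma tsum_ge_special {c f : ℕ → ℝ} (hc : ∀ j, 0 ≤ c j) (hcs : Summable c)
    (hfs : Summable f) (j₀ : ℕ) {A B : ℝ} (hB : 0 ≤ B) (hA : A ≤ f j₀)
    (hother : ∀ j, j ≠ j₀ → -(B * c j) ≤ f j) :
    A - B * (∑' j, c j) ≤ ∑' j, f j := by
  have hg : Summable (fun j => -(B * c j) + (if j = j₀ then A + B * c j₀ else 0)) :=
    ((hcs.mul_left B).neg.add (hasSum_ite_eq j₀ (A + B * c j₀)).summable)
  have hle : ∀ j, (-(B * c j) + (if j = j₀ then A + B * c j₀ else 0)) ≤ f j := by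
    intro j
    by_cases h : j = j₀
    · subst h; simp only [eq_self_iff_true, if_true]; linarith
    · simp only [if_neg h, add_zero]; exact hother j h
  have := Summable.tsum_le_tsum hle hg hfs
  rw [Summable.tsum_add ((hcs.mul_left B).neg) (hasSum_ite_eq j₀ (A + B * c j₀)).summable,
    tsum_neg, tsum_mul_left, (hasSum_ite_eq j₀ (A + B * c j₀)).tsum_eq] at this
  have hc0 : 0 ≤ c j₀ := hc j₀
  nlinarith [mul_nonneg hB hc0]
lemma kernel_cont (t x : ℝ) (ht : 0 < t) :
    Continuous fun y : ℝ => ((x - y) ^ 2 + t ^ 2)⁻¹ := by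
  apply Continuous.inv₀ (by fun_prop) (fun y => by positivity)

lemma kernel_pos (t x y : ℝ) (ht : 0 < t) : 0 < ((x - y) ^ 2 + t ^ 2)⁻¹ := by positivity

lemma kernel_le (t x y : ℝ) (ht : 0 < t) : ((x - y) ^ 2 + t ^ 2)⁻¹ ≤ (t ^ 2)⁻¹ := by
  apply inv_anti₀ (by positivity) (by nlinarith [sq_nonneg (x - y)])

lemma integrable_kernel (t x : ℝ) (ht : 0 < t) :
    Integrable (fun y => ((x - y) ^ 2 + t ^ 2)⁻¹) cμ := by
  apply Integrable.mono' (integrable_const ((t ^ 2)⁻¹))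
    (kernel_cont t x ht).aestronglyMeasurable
  filter_upwards with y
  rw [Real.norm_eq_abs, abs_of_pos (kernel_pos t x y ht)]
  exact kernel_le t x y ht

lemma summable_side (t x : ℝ) (ht : 0 < t) (pos : ℕ → ℝ) :
    Summable (fun j => (cm (j + 1) / 2) * ((x - pos j) ^ 2 + t ^ 2)⁻¹) := by
  apply Summable.of_nonneg_of_le
    (fun j => by have := cm_nonneg (j+1); have := kernel_pos t x (pos j) ht; positivity)
    (fun j => ?_) ((summable_cm.div_const 2).mul_right ((t ^ 2)⁻¹))
  have h1 := kernel_le t x (pos j) ht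
  have h2 := cm_nonneg (j + 1)
  exact mul_le_mul_of_nonneg_left h1 (by linarith)

lemma G_repr (t : ℝ) (ht : 0 < t) (x : ℝ) :
    (∫ y, ((x - y) ^ 2 + t ^ 2)⁻¹ ∂cμ)
      = (1 - ∑' j : ℕ, cm (j + 1)) * ((x - 0) ^ 2 + t ^ 2)⁻¹
        + (∑' j : ℕ, (cm (j + 1) / 2) * ((x - La j) ^ 2 + t ^ 2)⁻¹)
        + (∑' j : ℕ, (cm (j + 1) / 2) * ((x - Ra j) ^ 2 + t ^ 2)⁻¹) := by
  have hT0 : 0 ≤ (∑' j : ℕ, cm (j + 1)) := tsum_nonneg (fun j => cm_nonneg _)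
  have hT1 : (∑' j : ℕ, cm (j + 1)) ≤ 1 := tsum_cm_le
  have hInt : Integrable (fun y => ((x - y) ^ 2 + t ^ 2)⁻¹) cμ := integrable_kernel t x ht
  rw [show cμ = (ENNReal.ofReal (1 - ∑' j : ℕ, cm (j + 1))) • Measure.dirac 0
    + Measure.sum (fun j : ℕ => cwE (j + 1) • Measure.dirac (La j))
    + Measure.sum (fun j : ℕ => cwE (j + 1) • Measure.dirac (Ra j)) from rfl] at hInt ⊢
  rw [integral_add_measure hInt.left_of_add_measure hInt.right_of_add_measure,
    integral_add_measure hInt.left_of_add_measure.left_of_add_measure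
      hInt.left_of_add_measure.right_of_add_measure]
  congr 1
  · congr 1
    · rw [integral_smul_measure, integral_dirac, smul_eq_mul,
        ENNReal.toReal_ofReal (by linarith)]
    · rw [integral_sum_measure hInt.left_of_add_measure.right_of_add_measure]
      apply tsum_congr; intro j
      rw [integral_smul_measure, integral_dirac, smul_eq_mul]
      unfold cwE
      rw [ENNReal.toReal_ofReal (by have := cm_nonneg (j+1); linarith)]
  · rw [integral_sum_measure hInt.right_of_add_measure]
    apply tsum_congr; intro j
    rw [integral_smul_measure, integral_dirac, smul_eq_mul]
    unfold cwE
    rw [ENNReal.toReal_ofReal (by have := cm_nonneg (j+1); linarith)]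
lemma La_dist (j : ℕ) : |La j - cP (j + 1)| ≤ ((j + 1 : ℕ) : ℝ) := by
  unfold La
  rw [show cP (j + 1) - (j + 1) - cP (j + 1) = -((j:ℝ) + 1) by ring, abs_neg,
    abs_of_nonneg (by positivity)]
  push_cast
  exact le_rfl
lemma Ra_dist (j : ℕ) : |Ra j - cP (j + 1)| ≤ ((j + 1 : ℕ) : ℝ) := by
  unfold Ra
  rw [show cP (j + 1) + (j + 1) - cP (j + 1) = ((j:ℝ) + 1) by ring,
    abs_of_nonneg (by positivity)]
  push_cast
  exact le_rfl

lemma abs_atom_le {j : ℕ} {y : ℝ} (h : |y - cP (j + 1)| ≤ ((j + 1 : ℕ) : ℝ)) :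
    |y| ≤ 2 * cP (j + 1) := by
  have h1 := abs_le.1 h
  have h2 := nat_le_cP (j + 1)
  have h3 := cP_pos (j + 1)
  rw [abs_le]
  constructor <;> push_cast at h1 h2 ⊢ <;> linarith

lemma summable_bb {p : ℝ} (hp0 : 0 < p) (hp3 : p < 3) :
    Summable (fun j : ℕ => cm (j + 1) * (2 * cP (j + 1)) ^ p) := by
  set ε : ℝ := 3 - p with hε
  have hε0 : 0 < ε := by simp [hε]; linarith
  set C : ℝ := (2 : ℝ) ^ (p + 49 / (4 * ε)) with hC
  have key : ∀ k : ℕ, cm k * (2 * cP k) ^ p ≤ C * (1 / 2 : ℝ) ^ k := by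
    intro k
    have h2cP : 2 * cP k = (2 : ℝ) ^ (k ^ 2 + 1) := by unfold cP; rw [pow_succ]; ring
    have e0 : (2 * cP k) ^ p = (2 : ℝ) ^ (((k ^ 2 + 1 : ℕ) : ℝ) * p) := by
      rw [h2cP, ← Real.rpow_natCast 2 (k ^ 2 + 1), ← Real.rpow_mul (by norm_num)]
    have e1 : cm k ≤ (2 : ℝ) ^ ((6 * (k : ℝ)) - ((3 * k ^ 2 : ℕ) : ℝ)) := by
      unfold cm
      rw [Real.rpow_sub (by norm_num), div_le_div_iff₀ (by positivity) (by positivity)]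
      have hnum : (k : ℝ) ^ 6 ≤ (2 : ℝ) ^ (6 * (k : ℝ)) := by
        have : (k : ℝ) ≤ (2 : ℝ) ^ k := by exact_mod_cast (Nat.lt_two_pow_self (n := k)).le
        calc (k : ℝ) ^ 6 ≤ ((2 : ℝ) ^ k) ^ 6 :=
              pow_le_pow_left₀ (by positivity) this 6
          _ = (2 : ℝ) ^ (6 * k : ℕ) := by rw [← pow_mul]; ring_nf
          _ = (2 : ℝ) ^ ((6 * k : ℕ) : ℝ) := (Real.rpow_natCast 2 _).symm
          _ = (2 : ℝ) ^ (6 * (k : ℝ)) := by congr 1; push_cast; ring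
      have hden : ((2 : ℝ) ^ (3 * k ^ 2 : ℕ)) = (2 : ℝ) ^ ((3 * k ^ 2 : ℕ) : ℝ) :=
        (Real.rpow_natCast 2 _).symm
      rw [← hden]
      exact mul_le_mul hnum le_rfl (by positivity) (by positivity)
    have e2 : cm k * (2 * cP k) ^ p
        ≤ (2 : ℝ) ^ ((6 * (k : ℝ)) - ((3 * k ^ 2 : ℕ) : ℝ) + ((k ^ 2 + 1 : ℕ) : ℝ) * p) := by
      rw [Real.rpow_add (by norm_num), e0]
      apply mul_le_mul e1 le_rfl (by positivity) (by positivity)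
    have hexp : (6 * (k : ℝ)) - ((3 * k ^ 2 : ℕ) : ℝ) + ((k ^ 2 + 1 : ℕ) : ℝ) * p
        ≤ (p + 49 / (4 * ε)) + (-(k : ℝ)) := by
      push_cast
      set K : ℝ := (k : ℝ) with hK
      have hK0 : 0 ≤ K := Nat.cast_nonneg k
      have hq : 7 * K - ε * K ^ 2 ≤ 49 / (4 * ε) := by
        rw [le_div_iff₀ (by positivity)]
        nlinarith [sq_nonneg (2 * ε * K - 7)]
      have hsub : p = 3 - ε := by rw [hε]; ring
      have hKsq : K ^ 2 * p = K ^ 2 * 3 - K ^ 2 * ε := by rw [hsub]; ring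
      linarith [hq, hKsq]
    calc cm k * (2 * cP k) ^ p
        ≤ (2 : ℝ) ^ ((6 * (k : ℝ)) - ((3 * k ^ 2 : ℕ) : ℝ) + ((k ^ 2 + 1 : ℕ) : ℝ) * p) := e2
      _ ≤ (2 : ℝ) ^ ((p + 49 / (4 * ε)) + (-(k : ℝ))) :=
          Real.rpow_le_rpow_of_exponent_le one_le_two hexp
      _ = C * (1 / 2 : ℝ) ^ k := by
          rw [Real.rpow_add (by norm_num), hC]
          congr 1
          rw [Real.rpow_neg (by norm_num), Real.rpow_natCast]
          rw [← inv_pow, one_div]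
  apply Summable.of_nonneg_of_le
    (fun j => by
      have := cm_nonneg (j + 1)
      have : (0:ℝ) ≤ (2 * cP (j+1)) ^ p := Real.rpow_nonneg (by have := cP_pos (j+1); linarith) p
      have := cm_nonneg (j + 1)
      positivity)
    (fun j => ?_) ((summable_geometric_two.mul_right (1/2)).mul_left C)
  calc cm (j + 1) * (2 * cP (j + 1)) ^ p ≤ C * (1 / 2 : ℝ) ^ (j + 1) := key (j + 1)
    _ = C * ((1 / 2) ^ j * (1 / 2)) := by ring

lemma moment_integrable {p : ℝ} (hp0 : 0 < p) (hp3 : p < 3) :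
    Integrable (fun x : ℝ => |x| ^ p) cμ := by
  refine ⟨(by fun_prop : Measurable fun x : ℝ => |x| ^ p).aestronglyMeasurable, ?_⟩
  have habs : ∀ y : ℝ, (0:ℝ) ≤ |y| ^ p := fun y => Real.rpow_nonneg (abs_nonneg y) p
  have hnn : ∀ y : ℝ, ‖|y| ^ p‖ₑ = ENNReal.ofReal (|y| ^ p) :=
    fun y => Real.enorm_eq_ofReal (habs y)
  have hbb := summable_bb hp0 hp3
  have hside : ∀ pos : ℕ → ℝ, (∀ j, |pos j| ≤ 2 * cP (j + 1)) →
      (∑' j : ℕ, ∫⁻ y, ‖|y| ^ p‖ₑ ∂(cwE (j + 1) • Measure.dirac (pos j)))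
        ≤ ENNReal.ofReal (∑' j : ℕ, cm (j + 1) * (2 * cP (j + 1)) ^ p) := by
    intro pos hpos
    rw [ENNReal.ofReal_tsum_of_nonneg (fun j => by
        have h1 := cm_nonneg (j+1)
        have h2 : (0:ℝ) ≤ (2 * cP (j+1)) ^ p :=
          Real.rpow_nonneg (by have := cP_pos (j+1); linarith) p
        positivity) hbb]
    apply ENNReal.tsum_le_tsum
    intro j
    rw [lintegral_smul_measure, lintegral_dirac, hnn]
    unfold cwE
    rw [smul_eq_mul, ← ENNReal.ofReal_mul (by have := cm_nonneg (j+1); linarith)]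
    apply ENNReal.ofReal_le_ofReal
    have h1 : |pos j| ^ p ≤ (2 * cP (j + 1)) ^ p :=
      Real.rpow_le_rpow (abs_nonneg _) (hpos j) hp0.le
    have h2 := cm_nonneg (j + 1)
    have h3 := habs (pos j)
    calc cm (j + 1) / 2 * |pos j| ^ p ≤ cm (j + 1) * |pos j| ^ p := by nlinarith
      _ ≤ cm (j + 1) * (2 * cP (j + 1)) ^ p := by nlinarith
  show (∫⁻ y, ‖|y| ^ p‖ₑ ∂cμ) < ⊤
  rw [show cμ = (ENNReal.ofReal (1 - ∑' j : ℕ, cm (j + 1))) • Measure.dirac 0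
    + Measure.sum (fun j : ℕ => cwE (j + 1) • Measure.dirac (La j))
    + Measure.sum (fun j : ℕ => cwE (j + 1) • Measure.dirac (Ra j)) from rfl]
  rw [lintegral_add_measure, lintegral_add_measure, lintegral_sum_measure,
    lintegral_sum_measure]
  have h0 : (∫⁻ y, ‖|y| ^ p‖ₑ ∂((ENNReal.ofReal (1 - ∑' j : ℕ, cm (j + 1))) •
      Measure.dirac (0:ℝ))) = 0 := by
    rw [lintegral_smul_measure, lintegral_dirac]
    simp [abs_zero, Real.zero_rpow hp0.ne']
  rw [h0, zero_add]
  have hL := hside (fun j => La j) (fun j => abs_atom_le (La_dist j))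
  have hR := hside (fun j => Ra j) (fun j => abs_atom_le (Ra_dist j))
  exact lt_of_le_of_lt (add_le_add hL hR) (by simp [ENNReal.add_lt_top])
lemma tsum_half : (∑' j : ℕ, cm (j + 1) / 2) = (∑' j : ℕ, cm (j + 1)) / 2 := by
  simp only [div_eq_mul_inv]
  exact tsum_mul_right

lemma main_not_unimodal (t : ℝ) (ht : 0 < t) :
    ¬ Unimodal (fun x => ∫ y, ((x - y) ^ 2 + t ^ 2)⁻¹ ∂cμ) := by
  obtain ⟨k₀, hk₀⟩ := exists_nat_ge (2 * t)
  set K := max k₀ 4 with hKdef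
  have hK4 : 4 ≤ K := le_max_right _ _
  have hKt : 2 * t ≤ (K : ℝ) := hk₀.trans (by exact_mod_cast le_max_left k₀ 4)
  set j₀ := K - 1 with hj₀def
  have hj₀K : j₀ + 1 = K := by omega
  have hj₀cast : ((j₀ : ℝ) + 1) = (K : ℝ) := by exact_mod_cast congrArg Nat.cast hj₀K
  set R := cP K with hRdef
  set s := (K : ℝ) with hsdef
  have hR0 : 0 < R := cP_pos K
  have hs4 : (4 : ℝ) ≤ s := by rw [hsdef]; exact_mod_cast hK4
  have hs0 : 0 < s := by linarith only [hs4]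
  have hst : 2 * t ≤ s := hKt
  have hT0 : 0 ≤ (∑' j : ℕ, cm (j + 1)) := tsum_nonneg (fun j => cm_nonneg _)
  have hT1 : (∑' j : ℕ, cm (j + 1)) ≤ 1 := tsum_cm_le
  set T := ∑' j : ℕ, cm (j + 1) with hTdef
  set B := 16 * s / R ^ 3 with hBdef
  have hB0 : 0 ≤ B := by positivity
  have hcmK : 0 ≤ cm K := cm_nonneg K
  have hLaj₀ : La j₀ = R - s := by unfold La; rw [hj₀K, hj₀cast]
  have hRaj₀ : Ra j₀ = R + s := by unfold Ra; rw [hj₀K, hj₀cast]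
  have hevalm : |R - s - cP K| ≤ (K : ℝ) := by
    rw [show R - s - cP K = -s by rw [hRdef]; ring, abs_neg, abs_of_pos hs0]
  have hevalp : |R + s - cP K| ≤ (K : ℝ) := by
    rw [show R + s - cP K = s by rw [hRdef]; ring, abs_of_pos hs0]
  have heval0 : |R - cP K| ≤ (K : ℝ) := by
    rw [show R - cP K = 0 by rw [hRdef]; ring, abs_zero]
    positivity
  have hfar : ∀ x₁ y : ℝ, |x₁ - cP K| ≤ (K : ℝ) → cP K / 2 ≤ |x₁ - y| →
      cP K / 2 ≤ |R - y| →
      ((R - y) ^ 2 + t ^ 2)⁻¹ - ((x₁ - y) ^ 2 + t ^ 2)⁻¹ ≤ B := by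
    intro x₁ y hx₁ hd1 hd2
    have := kernel_diff_bound (u := x₁ - y) (v := R - y) ht hR0 hs0.le hd1 hd2
      (by rw [show x₁ - y - (R - y) = x₁ - R by ring, hRdef, hsdef]; exact hx₁)
    linarith only [this, hBdef.ge, hBdef.le]
  have sumbound : ∀ pos : ℕ → ℝ, (∀ j, |pos j - cP (j + 1)| ≤ ((j + 1 : ℕ) : ℝ)) →
      ∀ x₁ : ℝ, |x₁ - cP K| ≤ (K : ℝ) → ∀ A : ℝ,
      A ≤ (cm K / 2) * (((x₁ - pos j₀) ^ 2 + t ^ 2)⁻¹ - ((R - pos j₀) ^ 2 + t ^ 2)⁻¹) →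
      A - B * (T / 2)
        ≤ ∑' j : ℕ, ((cm (j + 1) / 2) * (((x₁ - pos j) ^ 2 + t ^ 2)⁻¹
            - ((R - pos j) ^ 2 + t ^ 2)⁻¹)) := by
    intro pos hpos x₁ hx₁ A hA
    have hsum1 := summable_side t x₁ ht pos
    have hsum2 := summable_side t R ht pos
    have hsummf : Summable (fun j : ℕ => (cm (j + 1) / 2) * (((x₁ - pos j) ^ 2 + t ^ 2)⁻¹
        - ((R - pos j) ^ 2 + t ^ 2)⁻¹)) := by
      have := hsum1.sub hsum2
      refine this.congr (fun j => ?_)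
      ring
    have hcsum : Summable (fun j : ℕ => cm (j + 1) / 2) := summable_cm.div_const 2
    have hother : ∀ j, j ≠ j₀ → -(B * (cm (j + 1) / 2))
        ≤ (cm (j + 1) / 2) * (((x₁ - pos j) ^ 2 + t ^ 2)⁻¹
            - ((R - pos j) ^ 2 + t ^ 2)⁻¹) := by
      intro j hj
      have hj1K : j + 1 ≠ K := by omega
      have hd1 : cP K / 2 ≤ |x₁ - pos j| := far_dist hK4 hj1K hx₁ (hpos j)
      have hd2 : cP K / 2 ≤ |R - pos j| := far_dist hK4 hj1K heval0 (hpos j)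
      have hdiff := hfar x₁ (pos j) hx₁ hd1 hd2
      have hc : 0 ≤ cm (j + 1) / 2 := by have := cm_nonneg (j + 1); linarith only [this]
      have := mul_le_mul_of_nonneg_left (show -B ≤ (((x₁ - pos j) ^ 2 + t ^ 2)⁻¹
          - ((R - pos j) ^ 2 + t ^ 2)⁻¹) by linarith only [hdiff]) hc
      calc -(B * (cm (j + 1) / 2)) = (cm (j + 1) / 2) * (-B) := by ring
        _ ≤ _ := this
    have hmain := tsum_ge_special (c := fun j => cm (j + 1) / 2) (A := A) (B := B)
      (fun j => by have := cm_nonneg (j + 1); linarith only [this]) hcsum hsummf j₀ hB0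
      (by rw [hj₀K]; exact hA) hother
    rw [tsum_half] at hmain
    exact hmain
  set Agood : ℝ := (cm K / 2) * ((t ^ 2)⁻¹ - (4 * t ^ 2)⁻¹) with hAgood
  set Abad : ℝ := -((cm K / 2) * (4 * t ^ 2)⁻¹) with hAbad
  have hinv1 : (s ^ 2 + t ^ 2)⁻¹ ≤ (4 * t ^ 2)⁻¹ := by
    apply inv_anti₀ (by positivity) (by nlinarith only [hst, ht.le, sq_nonneg (s - 2 * t), sq_nonneg t])
  have hgoodineq : Agood ≤ (cm K / 2) * ((t ^ 2)⁻¹ - (s ^ 2 + t ^ 2)⁻¹) := by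
    rw [hAgood]
    apply mul_le_mul_of_nonneg_left _ (by linarith only [hcmK])
    linarith only [hinv1]
  have hbadineq : Abad ≤ (cm K / 2) * (((2 * s) ^ 2 + t ^ 2)⁻¹ - (s ^ 2 + t ^ 2)⁻¹) := by
    rw [hAbad]
    have h4 : (0:ℝ) ≤ (cm K / 2) * ((2 * s) ^ 2 + t ^ 2)⁻¹ := by positivity
    have h5 := mul_le_mul_of_nonneg_left hinv1 (show (0:ℝ) ≤ cm K / 2 by linarith only [hcmK])
    have e : (cm K / 2) * (((2 * s) ^ 2 + t ^ 2)⁻¹ - (s ^ 2 + t ^ 2)⁻¹)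
        = (cm K / 2) * ((2 * s) ^ 2 + t ^ 2)⁻¹ - (cm K / 2) * (s ^ 2 + t ^ 2)⁻¹ := by ring
    linarith only [h4, h5, e]
  have key : ∀ x₁ : ℝ, |x₁ - cP K| ≤ (K : ℝ) → ∀ A₁ A₂ : ℝ, A₁ + A₂ = Agood + Abad →
      A₁ ≤ (cm K / 2) * (((x₁ - La j₀) ^ 2 + t ^ 2)⁻¹ - ((R - La j₀) ^ 2 + t ^ 2)⁻¹) →
      A₂ ≤ (cm K / 2) * (((x₁ - Ra j₀) ^ 2 + t ^ 2)⁻¹ - ((R - Ra j₀) ^ 2 + t ^ 2)⁻¹) →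
      (∫ y, ((R - y) ^ 2 + t ^ 2)⁻¹ ∂cμ) < ∫ y, ((x₁ - y) ^ 2 + t ^ 2)⁻¹ ∂cμ := by
    intro x₁ hx₁ A₁ A₂ hA12 hgood hbad
    have hrep1 := G_repr t ht x₁
    have hrep2 := G_repr t ht R
    have hD0 : -B ≤ (1 - T) * ((x₁ - 0) ^ 2 + t ^ 2)⁻¹
        - (1 - T) * ((R - 0) ^ 2 + t ^ 2)⁻¹ := by
      have hd1 : cP K / 2 ≤ |x₁ - 0| := far_zero hK4 hx₁
      have hd2 : cP K / 2 ≤ |R - 0| := far_zero hK4 heval0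
      have hdiff := hfar x₁ 0 hx₁ hd1 hd2
      have h1T : 0 ≤ 1 - T := by linarith only [hT1]
      have hprod := mul_le_mul_of_nonneg_left (show -B ≤ ((x₁ - 0) ^ 2 + t ^ 2)⁻¹
          - ((R - 0) ^ 2 + t ^ 2)⁻¹ by linarith only [hdiff]) h1T
      have e0 : (1 - T) * ((x₁ - 0) ^ 2 + t ^ 2)⁻¹ - (1 - T) * ((R - 0) ^ 2 + t ^ 2)⁻¹
          = (1 - T) * (((x₁ - 0) ^ 2 + t ^ 2)⁻¹ - ((R - 0) ^ 2 + t ^ 2)⁻¹) := by ring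
      have e1 : (1 - T) * (-B) = -B + T * B := by ring
      have e2 := mul_nonneg hT0 hB0
      linarith only [hprod, e0, e1, e2]
    have hDL := sumbound La La_dist x₁ hx₁ A₁ hgood
    have hDR := sumbound Ra Ra_dist x₁ hx₁ A₂ hbad
    have hsubL : (∑' j : ℕ, (cm (j + 1) / 2) * ((x₁ - La j) ^ 2 + t ^ 2)⁻¹)
        - (∑' j : ℕ, (cm (j + 1) / 2) * ((R - La j) ^ 2 + t ^ 2)⁻¹)
        = ∑' j : ℕ, ((cm (j + 1) / 2) * (((x₁ - La j) ^ 2 + t ^ 2)⁻¹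
            - ((R - La j) ^ 2 + t ^ 2)⁻¹)) := by
      rw [← Summable.tsum_sub (summable_side t x₁ ht _) (summable_side t R ht _)]
      apply tsum_congr; intro j; ring
    have hsubR : (∑' j : ℕ, (cm (j + 1) / 2) * ((x₁ - Ra j) ^ 2 + t ^ 2)⁻¹)
        - (∑' j : ℕ, (cm (j + 1) / 2) * ((R - Ra j) ^ 2 + t ^ 2)⁻¹)
        = ∑' j : ℕ, ((cm (j + 1) / 2) * (((x₁ - Ra j) ^ 2 + t ^ 2)⁻¹
            - ((R - Ra j) ^ 2 + t ^ 2)⁻¹)) := by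
      rw [← Summable.tsum_sub (summable_side t x₁ ht _) (summable_side t R ht _)]
      apply tsum_congr; intro j; ring
    have hR3 : R ^ 3 = (2 : ℝ) ^ (3 * K ^ 2) := by
      rw [hRdef]; unfold cP; rw [← pow_mul]; ring_nf
    have hcmKval : cm K / s ^ 2 = (K : ℝ) ^ 4 / R ^ 3 := by
      unfold cm
      rw [hR3, hsdef]
      have hK0 : (0:ℝ) < (K : ℝ) := by linarith only [hs4, hsdef.le]
      have h2K : (0:ℝ) < ((2 : ℝ) ^ (3 * K ^ 2)) := by positivity
      field_simp
    have hnum : Agood + Abad - 2 * B > 0 := by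
      have e1 : Agood + Abad = cm K / (4 * t ^ 2) := by
        rw [hAgood, hAbad]
        field_simp
        ring
      have hs2t : 4 * t ^ 2 ≤ s ^ 2 := by nlinarith only [hst, ht.le, sq_nonneg (s - 2 * t)]
      have e2 : cm K / s ^ 2 ≤ cm K / (4 * t ^ 2) := by
        have h9 := mul_le_mul_of_nonneg_left
          (inv_anti₀ (by positivity) hs2t) hcmK
        simpa [div_eq_mul_inv] using h9
      have e3 : 32 * s / R ^ 3 < (K : ℝ) ^ 4 / R ^ 3 := by
        apply div_lt_div_of_pos_right _ (by positivity)
        rw [← hsdef]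
        have q1 : 16 ≤ s * s := by nlinarith only [hs4]
        have q2 : 64 * s ≤ s * s * s * s := by nlinarith only [q1, hs4, hs0]
        nlinarith only [q2, hs0]
      rw [e1, hBdef]
      rw [hcmKval] at e2
      rw [← hsdef] at e2 e3
      have e4 : (2:ℝ) * (16 * s / R ^ 3) = 32 * s / R ^ 3 := by ring
      linarith only [e2, e3, e4]
    rw [hrep1, hrep2]
    have hfin : (0:ℝ) < ((1 - T) * ((x₁ - 0) ^ 2 + t ^ 2)⁻¹
          - (1 - T) * ((R - 0) ^ 2 + t ^ 2)⁻¹)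
          + ((∑' j : ℕ, (cm (j + 1) / 2) * ((x₁ - La j) ^ 2 + t ^ 2)⁻¹)
            - (∑' j : ℕ, (cm (j + 1) / 2) * ((R - La j) ^ 2 + t ^ 2)⁻¹))
          + ((∑' j : ℕ, (cm (j + 1) / 2) * ((x₁ - Ra j) ^ 2 + t ^ 2)⁻¹)
            - (∑' j : ℕ, (cm (j + 1) / 2) * ((R - Ra j) ^ 2 + t ^ 2)⁻¹)) := by
      rw [hsubL, hsubR]
      have c1 := add_le_add (add_le_add hD0 hDL) hDR
      have hBT : B * T ≤ B := mul_le_of_le_one_right hB0 hT1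
      have c2 : (0:ℝ) < -B + (A₁ - B * (T / 2)) + (A₂ - B * (T / 2)) := by
        linarith only [hnum, hA12, hBT]
      linarith only [c1, c2]
    linarith only [hfin]
  apply not_unimodal_of (u := R - s) (v := R) (z := R + s) (by linarith only [hs0]) (by linarith only [hs0])
  · apply key (R - s) hevalm Agood Abad rfl
    · rw [hLaj₀, show R - s - (R - s) = (0:ℝ) by ring, show R - (R - s) = s by ring,
        show ((0:ℝ)) ^ 2 + t ^ 2 = t ^ 2 by ring]
      exact hgoodineq
    · rw [hRaj₀, show R - s - (R + s) = -(2*s) by ring, show R - (R + s) = -s by ring,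
        neg_sq, neg_sq]
      exact hbadineq
  · apply key (R + s) hevalp Abad Agood (by ring)
    · rw [hLaj₀, show R + s - (R - s) = 2*s by ring, show R - (R - s) = s by ring]
      exact hbadineq
    · rw [hRaj₀, show R + s - (R + s) = (0:ℝ) by ring, show R - (R + s) = -s by ring,
        neg_sq, show ((0:ℝ)) ^ 2 + t ^ 2 = t ^ 2 by ring]
      exact hgoodineq

theorem exists_measure_moments_below_three_cauchy_convolution_never_unimodal :
    ∃ μ : Measure ℝ, IsProbabilityMeasure μ ∧
      (∀ p : ℝ, 0 < p → p < 3 → Integrable (fun x : ℝ => |x| ^ p) μ) ∧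
      (∀ t : ℝ, 0 < t →
        ¬ Unimodal (fun x => ∫ y, ((x - y) ^ 2 + t ^ 2)⁻¹ ∂μ)) := by
  exact ⟨cμ, cμ_prob, fun p hp0 hp3 => moment_integrable hp0 hp3,
    fun t ht => main_not_unimodal t ht⟩

end
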